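/- In a credit-attribution setting with reliabilities p : N → [0,1], let x ∈ N and T ⊆ N∖{x}. Define p' : N → [0,1] by p'_j = 0 for j ∈ T and p'_j = p_j otherwise. Then Sh[v̄_{FC}](x) evaluated at reliabilities p' is greater than or equal to Sh[v̄_{FC}](x) evaluated at reliabilities p. In other words, no removal attack can decrease the Shapley value of a given player in the full credit attribution game. -/
import Mathlib


open Finset

attribute [local instance] Classical.propDecidable

noncomputable section

/-- `Π_{T,S}(p) = (∏_{i∈T} p i) * (∏_{i∈S\T} (1 - p i))`. -/
def prodPi {α : Type*} (p : α → ℝ) (T S : Finset α) : ℝ :=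
  (∏ i ∈ T, p i) * (∏ i ∈ S \ T, (1 - p i))

/-- Reliability extension of a TU-game. -/
def relExt {α : Type*} (p : α → ℝ) (v : Finset α → ℝ) (S : Finset α) : ℝ :=
  ∑ T ∈ S.powerset, v T * prodPi p T S

/-- The set of players preceding `x` in the ordering `σ`. -/
def precedingSet {α : Type*} [Fintype α] (σ : Fin (Fintype.card α) ≃ α) (x : α) : Finset α :=
  Finset.univ.filter fun y => σ.symm y < σ.symm x

/-- The Shapley value of player `x` in the TU-game `v`. -/
def shapley {α : Type*} [Fintype α] (v : Finset α → ℝ) (x : α) : ℝ :=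
  (1 / ((Fintype.card α).factorial : ℝ)) *
    ∑ σ : Fin (Fintype.card α) ≃ α,
      (v (insert x (precedingSet σ x)) - v (precedingSet σ x))

/-- `Pap x`: the papers having `x` among their authors. -/
def Pap {α β : Type*} [Fintype β] (Auth : β → Finset α) (x : α) : Finset β :=
  Finset.univ.filter fun k => x ∈ Auth k

/-- The full credit game. -/
def vFC {α β : Type*} [Fintype β] (Auth : β → Finset α) (w : β → ℝ) (S : Finset α) : ℝ :=
  ∑ k ∈ Finset.univ.filter (fun k => (Auth k ∩ S).Nonempty), w k

/-- The full obligation game. -/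
def vFO {α β : Type*} [Fintype β] (Auth : β → Finset α) (w : β → ℝ) (S : Finset α) : ℝ :=
  ∑ k ∈ Finset.univ.filter (fun k => Auth k ⊆ S), w k

lemma sum_prodPi {α : Type*} (p : α → ℝ) (S : Finset α) :
    ∑ T ∈ S.powerset, prodPi p T S = 1 := by
  calc ∑ T ∈ S.powerset, prodPi p T S
      = ∏ i ∈ S, (p i + (1 - p i)) := by
        rw [Finset.prod_add]; simp only [prodPi]
    _ = 1 := by simp

lemma sum_prodPi_disj {α : Type*} (p : α → ℝ) (S A : Finset α) :
    ∑ T ∈ (S \ A).powerset, prodPi p T S = ∏ i ∈ S ∩ A, (1 - p i) := by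
  have key : ∀ T ∈ (S \ A).powerset,
      prodPi p T S = prodPi p T (S \ A) * ∏ i ∈ S ∩ A, (1 - p i) := by
    intro T hT
    rw [Finset.mem_powerset] at hT
    have hdec : S \ T = ((S \ A) \ T) ∪ (S ∩ A) := by
      ext i
      simp only [mem_sdiff, mem_union, mem_inter]
      constructor
      · rintro ⟨hiS, hiT⟩
        by_cases hiA : i ∈ A
        · exact Or.inr ⟨hiS, hiA⟩
        · exact Or.inl ⟨⟨hiS, hiA⟩, hiT⟩
      · rintro (⟨⟨hiS, _⟩, hiT⟩ | ⟨hiS, hiA⟩)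
        · exact ⟨hiS, hiT⟩
        · exact ⟨hiS, fun h => (Finset.mem_sdiff.1 (hT h)).2 hiA⟩
    have hdisj : Disjoint ((S \ A) \ T) (S ∩ A) := by
      rw [Finset.disjoint_left]
      intro i hi hi2
      exact (Finset.mem_sdiff.1 (Finset.mem_sdiff.1 hi).1).2 (Finset.mem_inter.1 hi2).2
    simp only [prodPi]
    rw [hdec, Finset.prod_union hdisj]
    ring
  rw [Finset.sum_congr rfl key, ← Finset.sum_mul, sum_prodPi, one_mul]

lemma relExt_vFC {α β : Type*} [Fintype β]
    (Auth : β → Finset α) (w : β → ℝ) (p : α → ℝ) (S : Finset α) :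
    relExt p (vFC Auth w) S = ∑ k, w k * (1 - ∏ i ∈ S ∩ Auth k, (1 - p i)) := by
  unfold relExt vFC
  have step1 : ∀ T ∈ S.powerset,
      (∑ k ∈ Finset.univ.filter (fun k => (Auth k ∩ T).Nonempty), w k) * prodPi p T S
      = ∑ k : β, (if (Auth k ∩ T).Nonempty then w k * prodPi p T S else 0) := by
    intro T _
    rw [Finset.sum_filter, Finset.sum_mul]
    exact Finset.sum_congr rfl fun k _ => by split <;> simp
  rw [Finset.sum_congr rfl step1, Finset.sum_comm]
  refine Finset.sum_congr rfl fun k _ => ?_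
  have hfilter : S.powerset.filter (fun T => ¬ (Auth k ∩ T).Nonempty)
      = (S \ Auth k).powerset := by
    ext U
    simp only [Finset.mem_filter, Finset.mem_powerset, Finset.not_nonempty_iff_eq_empty,
      Finset.subset_sdiff, ← Finset.disjoint_iff_inter_eq_empty]
    exact and_congr_right fun _ => disjoint_comm
  have hsplit := Finset.sum_filter_add_sum_filter_not S.powerset
      (fun T => (Auth k ∩ T).Nonempty) (fun T => prodPi p T S)
  rw [hfilter, sum_prodPi_disj, sum_prodPi] at hsplit
  calc ∑ T ∈ S.powerset, (if (Auth k ∩ T).Nonempty then w k * prodPi p T S else 0)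
      = w k * ∑ T ∈ S.powerset.filter (fun T => (Auth k ∩ T).Nonempty), prodPi p T S := by
        rw [← Finset.sum_filter, Finset.mul_sum]
    _ = w k * (1 - ∏ i ∈ S ∩ Auth k, (1 - p i)) := by rw [← eq_sub_iff_add_eq.mpr hsplit]

lemma marginal_mono {α β : Type*} [Fintype β]
    (Auth : β → Finset α) (w : β → ℝ) (hw : ∀ k, 0 ≤ w k)
    (p p' : α → ℝ) (hp : ∀ i, p i ∈ Set.Icc (0 : ℝ) 1) (hple : ∀ i, p' i ≤ p i)
    (x : α) (hpx : p' x = p x) (S : Finset α) (hxS : x ∉ S) :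
    relExt p (vFC Auth w) (insert x S) - relExt p (vFC Auth w) S ≤
    relExt p' (vFC Auth w) (insert x S) - relExt p' (vFC Auth w) S := by
  rw [relExt_vFC, relExt_vFC, relExt_vFC, relExt_vFC, ← Finset.sum_sub_distrib,
    ← Finset.sum_sub_distrib]
  refine Finset.sum_le_sum fun k _ => ?_
  by_cases hxA : x ∈ Auth k
  · have hins : insert x S ∩ Auth k = insert x (S ∩ Auth k) :=
      Finset.insert_inter_of_mem hxA
    have hxSA : x ∉ S ∩ Auth k := fun h => hxS (Finset.mem_inter.1 h).1
    rw [hins, Finset.prod_insert hxSA, Finset.prod_insert hxSA, hpx]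
    have hprod : ∏ i ∈ S ∩ Auth k, (1 - p i) ≤ ∏ i ∈ S ∩ Auth k, (1 - p' i) := by
      refine Finset.prod_le_prod (fun i _ => ?_) (fun i _ => ?_)
      · linarith [(hp i).2]
      · linarith [hple i]
    have h1 : w k * (1 - (1 - p x) * ∏ i ∈ S ∩ Auth k, (1 - p i)) -
        w k * (1 - ∏ i ∈ S ∩ Auth k, (1 - p i)) =
        (w k * p x) * ∏ i ∈ S ∩ Auth k, (1 - p i) := by ring
    have h2 : w k * (1 - (1 - p x) * ∏ i ∈ S ∩ Auth k, (1 - p' i)) -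
        w k * (1 - ∏ i ∈ S ∩ Auth k, (1 - p' i)) =
        (w k * p x) * ∏ i ∈ S ∩ Auth k, (1 - p' i) := by ring
    rw [h1, h2]
    exact mul_le_mul_of_nonneg_left hprod (mul_nonneg (hw k) (hp x).1)
  · simp [Finset.insert_inter_of_notMem hxA]

theorem stmt_9 {α β : Type*} [Fintype α] [Fintype β] [DecidableEq α]
    (Auth : β → Finset α) (hAuth : ∀ k, (Auth k).Nonempty)
    (w : β → ℝ) (hw : ∀ k, 0 ≤ w k)
    (p : α → ℝ) (hp : ∀ i, p i ∈ Set.Icc (0 : ℝ) 1)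
    (x : α) (T : Finset α) (hT : x ∉ T) :
    shapley (relExt p (vFC Auth w)) x ≤
      shapley (relExt (fun j => if j ∈ T then 0 else p j) (vFC Auth w)) x := by
  set p' : α → ℝ := fun j => if j ∈ T then 0 else p j with hp'
  have hple : ∀ i, p' i ≤ p i := by
    intro i; simp only [hp']
    split
    · exact (hp i).1
    · exact le_refl _
  have hpx : p' x = p x := by simp [hp', hT]
  have hxP : ∀ σ : Fin (Fintype.card α) ≃ α, x ∉ precedingSet σ x := by
    intro σ; simp [precedingSet]
  unfold shapley
  refine mul_le_mul_of_nonneg_left (Finset.sum_le_sum fun σ _ =>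
    marginal_mono Auth w hw p p' hp hple x hpx _ (hxP σ)) ?_
  positivity

end
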